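/- Let M, a ∈ ℝ with 0 < |a| < M. Define the tortoise coordinate r* : (r₋, r₊) → ℝ by r*(r) = ∫_M^r (x²+a²)/Δ(x) dx, and the Cauchy-horizon surface gravity κ₋ = (r₋ − r₊)/(4M·r₋) < 0. Then there exists L ∈ ℝ such that r*(r) − (1/(2κ₋))·ln(r − r₋) tends to L as r → r₋ from the right; in particular r*(r) → +∞ as r → r₋⁺. -/

import Mathlib

noncomputable section

open Filter

/-- `Δ(r) = r² − 2Mr + a²`. -/
def Δk (M a r : ℝ) : ℝ := r^2 - 2*M*r + a^2

/-- The larger root `r₊ = M + √(M²−a²)` of `Δ` (event horizon radius). -/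
def rpK (M a : ℝ) : ℝ := M + Real.sqrt (M^2 - a^2)

/-- The smaller root `r₋ = M − √(M²−a²)` of `Δ` (Cauchy horizon radius). -/
def rmK (M a : ℝ) : ℝ := M - Real.sqrt (M^2 - a^2)

/-- The tortoise coordinate `r*(r) = ∫_M^r (x²+a²)/Δ(x) dx`. -/
def rstar (M a : ℝ) (r : ℝ) : ℝ := ∫ x in M..r, (x^2 + a^2)/Δk M a x

/-- The Cauchy-horizon surface gravity `κ₋ = (r₋ − r₊)/(4Mr₋)`. -/
def κm (M a : ℝ) : ℝ := (rmK M a - rpK M a)/(4*M*rmK M a)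

/-- **Asymptotics of the tortoise coordinate at the Cauchy horizon:**
`r*(r) = (1/(2κ₋))·ln(r − r₋) + O(1)` as `r → r₋⁺`; in particular `r* → +∞`. -/
theorem stmt_18 (M a : ℝ) (ha : 0 < |a|) (haM : |a| < M) :
    (∃ L : ℝ, Tendsto
        (fun r => rstar M a r - (1/(2 * κm M a)) * Real.log (r - rmK M a))
        (nhdsWithin (rmK M a) (Set.Ioi (rmK M a))) (nhds L)) ∧
    Tendsto (rstar M a) (nhdsWithin (rmK M a) (Set.Ioi (rmK M a))) atTop := by
  have hM : 0 < M := lt_of_le_of_lt (abs_nonneg a) haM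
  have ha2 : a^2 < M^2 := by nlinarith [abs_nonneg a, sq_abs a]
  have ha2' : 0 < a^2 := by nlinarith [sq_abs a]
  set s := Real.sqrt (M^2 - a^2) with hsdef
  have hsq : s^2 = M^2 - a^2 := Real.sq_sqrt (by linarith)
  have hs0 : 0 < s := Real.sqrt_pos.mpr (by linarith)
  have hsM : s < M := by nlinarith
  have hrm : rmK M a = M - s := rfl
  have hrp : rpK M a = M + s := rfl
  set rm : ℝ := M - s with hrmdef
  set rp : ℝ := M + s with hrpdef
  have hrm0 : 0 < rm := by simp only [hrmdef]; linarith
  have hrmrp : rm < rp := by simp only [hrmdef, hrpdef]; linarith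
  have hMIoo : M ∈ Set.Ioo rm rp := ⟨by simp [hrmdef]; linarith, by simp [hrpdef]; linarith⟩
  have hfac : ∀ x : ℝ, Δk M a x = (x - rm) * (x - rp) := by
    intro x; unfold Δk; simp only [hrmdef, hrpdef]; linear_combination hsq
  set A : ℝ := -(M * rm) / s with hAdef
  set B : ℝ := (M * rp) / s with hBdef
  have hA : 1/(2 * κm M a) = A := by
    unfold κm
    rw [hrm, hrp]
    have h1 : rm - rp = -(2*s) := by rw [hrmdef, hrpdef]; ring
    rw [h1, hAdef]
    field_simp
    ring
  have hAneg : A < 0 := by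
    rw [hAdef]
    apply div_neg_of_neg_of_pos _ hs0
    nlinarith
  set C : ℝ := A * Real.log (M - rm) + B * Real.log (rp - M) with hCdef
  set F : ℝ → ℝ := fun r => (r - M) + A * Real.log (r - rm) + B * Real.log (rp - r) - C
    with hFdef
  have hF0 : F M = 0 := by simp only [hFdef, hCdef]; ring
  have hderiv : ∀ x ∈ Set.Ioo rm rp, HasDerivAt F ((x^2 + a^2)/Δk M a x) x := by
    intro x hx
    have hx1 : x - rm ≠ 0 := sub_ne_zero.mpr (ne_of_gt hx.1)
    have hx3 : rp - x ≠ 0 := sub_ne_zero.mpr (ne_of_gt hx.2)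
    have h1 : HasDerivAt (fun r : ℝ => Real.log (r - rm)) (1/(x - rm)) x := by
      exact ((Real.hasDerivAt_log hx1).comp x ((hasDerivAt_id x).sub_const rm)).congr_deriv (by simp : _ = 1/(x - rm))
    have h2 : HasDerivAt (fun r : ℝ => Real.log (rp - r)) (-(1/(rp - x))) x := by
      have := (Real.hasDerivAt_log hx3).comp x ((hasDerivAt_id x).const_sub rp)
      exact this.congr_deriv (by simp)
    have hD := ((((hasDerivAt_id x).sub_const M).add (h1.const_mul A)).add
      (h2.const_mul B)).sub_const C
    have hx2 : x - rp ≠ 0 := sub_ne_zero.mpr (ne_of_lt hx.2)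
    have key : x^2 + a^2 = (x - rm)*(x - rp) + A*(x - rp) + B*(x - rm) := by
      rw [hAdef, hBdef, hrmdef, hrpdef]
      field_simp
      linear_combination s * hsq
    refine hD.congr_deriv (Eq.symm ?_)
    rw [hfac x, key]
    field_simp
    ring
  have hrstar : ∀ r ∈ Set.Ioo rm rp, rstar M a r = F r := by
    intro r hr
    have hsub : Set.uIcc M r ⊆ Set.Ioo rm rp :=
      (Set.ordConnected_Ioo).uIcc_subset hMIoo hr
    have hcont : ContinuousOn (fun x => (x^2 + a^2)/Δk M a x) (Set.uIcc M r) := by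
      apply ContinuousOn.div
      · fun_prop
      · unfold Δk; fun_prop
      · intro x hx
        rw [hfac x]
        have hx' := hsub hx
        exact mul_ne_zero (sub_ne_zero.mpr (ne_of_gt hx'.1)) (sub_ne_zero.mpr (ne_of_lt hx'.2))
    have := intervalIntegral.integral_eq_sub_of_hasDerivAt
      (fun x hx => hderiv x (hsub hx)) hcont.intervalIntegrable
    unfold rstar
    rw [this, hF0, sub_zero]
  have hmem : Set.Ioo rm rp ∈ nhdsWithin rm (Set.Ioi rm) :=
    Ioo_mem_nhdsGT_of_mem ⟨le_refl rm, hrmrp⟩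
  set G : ℝ → ℝ := fun r => (r - M) + B * Real.log (rp - r) - C with hGdef
  have hEqEv : (fun r => rstar M a r - (1/(2 * κm M a)) * Real.log (r - rmK M a))
      =ᶠ[nhdsWithin rm (Set.Ioi rm)] G := by
    filter_upwards [hmem] with r hr
    rw [hA, hrstar r hr, hrm]
    simp only [hFdef, hGdef]
    ring
  have hGlim : Tendsto G (nhdsWithin rm (Set.Ioi rm))
      (nhds ((rm - M) + B * Real.log (rp - rm) - C)) := by
    apply Tendsto.mono_left _ nhdsWithin_le_nhds
    apply ContinuousAt.tendsto
    have : ContinuousAt (fun r : ℝ => Real.log (rp - r)) rm :=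
      (Real.continuousAt_log (by linarith [hrmrp] : rp - rm ≠ 0)).comp
        (by fun_prop)
    fun_prop
  have hpart1 : Tendsto
      (fun r => rstar M a r - (1/(2 * κm M a)) * Real.log (r - rmK M a))
      (nhdsWithin (rmK M a) (Set.Ioi (rmK M a))) (nhds ((rm - M) + B * Real.log (rp - rm) - C)) := by
    rw [hrm]
    exact hGlim.congr' hEqEv.symm
  refine ⟨⟨_, hpart1⟩, ?_⟩
  have hlog : Tendsto (fun r => Real.log (r - rm)) (nhdsWithin rm (Set.Ioi rm)) atBot := by
    apply Real.tendsto_log_nhdsGT_zero.comp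
    apply tendsto_nhdsWithin_of_tendsto_nhds_of_eventually_within
    · have : Tendsto (fun r : ℝ => r - rm) (nhds rm) (nhds (rm - rm)) :=
        (continuous_id.sub continuous_const).tendsto rm
      simpa using this.mono_left nhdsWithin_le_nhds
    · filter_upwards [self_mem_nhdsWithin] with r hr
      exact sub_pos.mpr (Set.mem_Ioi.mp hr)
  have hAlog : Tendsto (fun r => A * Real.log (r - rm)) (nhdsWithin rm (Set.Ioi rm)) atTop :=
    (tendsto_const_mul_atTop_of_neg hAneg).mpr hlog
  rw [hrm]
  have := hpart1.add_atTop hAlog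
  rw [hrm] at this
  apply this.congr
  intro r
  rw [hA]
  ring
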